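/- For every integer N ≥ 2, the function R(r) = 2r/(1-r) + log(1-r) + ∑_{n=N}^∞ (2 - 1/n) r^n - (1 - log 2) is strictly increasing on (0, 1), satisfies R(0) = log 2 - 1 < 0 and R(1/2) > 0, and has a unique root in (0, 1/2). -/

import Mathlib

open Real Finset

namespace BRaux

noncomputable def G (N : ℕ) (r : ℝ) : ℝ :=
  2*r/(1-r) + 2*Real.log (1-r) + 2*r^N/(1-r) + (∑ k ∈ Finset.range N, r^k/(k:ℝ))
    - (1 - Real.log 2)

noncomputable def G' (N : ℕ) (r : ℝ) : ℝ :=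
  (2*(1-r) - 2*r*(-1))/(1-r)^2 + 2*(-1/(1-r))
    + ((2*(N:ℝ)*r^(N-1))*(1-r) - 2*r^N*(-1))/(1-r)^2
    + ∑ k ∈ Finset.range N, ((k:ℝ)*r^(k-1))/(k:ℝ)

lemma tsum_eq (N : ℕ) (hN : 2 ≤ N) {r : ℝ} (hr : |r| < 1) :
    (∑' n : ℕ, (2 - 1/((n:ℝ)+N)) * r^(n+N))
      = 2*r^N/(1-r) + Real.log (1-r) + ∑ k ∈ Finset.range N, r^k/(k:ℝ) := by
  set f : ℕ → ℝ := fun n => r^(n+1)/((n:ℝ)+1) with hf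
  have hlog : HasSum f (-Real.log (1-r)) := by
    simpa [f] using hasSum_pow_div_log_of_abs_lt_one hr
  set M := N - 1 with hM
  have hMN : M + 1 = N := by omega
  have H2 : HasSum (fun n : ℕ => f (n + M))
      (-Real.log (1-r) - ∑ i ∈ Finset.range M, f i) := by
    rw [hasSum_nat_add_iff' M]; exact hlog
  have H2' : HasSum (fun n : ℕ => r^(n+N)/((n:ℝ)+N))
      (-Real.log (1-r) - ∑ i ∈ Finset.range M, f i) := by
    refine H2.congr_fun fun n => ?_
    simp only [f]
    have h1 : n + M + 1 = n + N := by omega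
    have h2 : ((n + M : ℕ) : ℝ) + 1 = (n:ℝ) + N := by
      push_cast; have : (M:ℝ) = (N:ℝ) - 1 := by
        have : ((M+1 : ℕ):ℝ) = (N:ℝ) := by rw [hMN]
        push_cast at this; linarith
      linarith
    rw [h1, h2]
  have H1 : HasSum (fun n : ℕ => 2 * r^(n+N)) (2 * (r^N * (1-r)⁻¹)) := by
    have := (hasSum_geometric_of_abs_lt_one hr).mul_left (r^N)
    have h : HasSum (fun n : ℕ => r^(n+N)) (r^N * (1-r)⁻¹) := by
      refine this.congr_fun fun n => ?_
      rw [← pow_add, Nat.add_comm]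
    exact h.mul_left 2
  have H : HasSum (fun n : ℕ => (2 - 1/((n:ℝ)+N)) * r^(n+N))
      (2 * (r^N * (1-r)⁻¹) - (-Real.log (1-r) - ∑ i ∈ Finset.range M, f i)) := by
    refine (H1.sub H2').congr_fun fun n => ?_
    ring
  rw [H.tsum_eq]
  have hsum : ∑ k ∈ Finset.range N, r^k/(k:ℝ) = ∑ i ∈ Finset.range M, f i := by
    rw [← hMN, Finset.sum_range_succ']
    simp only [f]
    push_cast
    norm_num
  rw [hsum]
  have h1r : (1:ℝ) - r ≠ 0 := by
    have : r < 1 := lt_of_abs_lt hr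
    linarith
  field_simp
  ring

lemma body_eq (N : ℕ) (hN : 2 ≤ N) {r : ℝ} (hr : |r| < 1) :
    2*r/(1-r) + Real.log (1-r) + (∑' n : ℕ, (2 - 1/((n:ℝ)+N)) * r^(n+N))
      - (1 - Real.log 2) = G N r := by
  rw [tsum_eq N hN hr]; unfold G; ring

lemma hasDerivAt_G (N : ℕ) {r : ℝ} (hr : r < 1) : HasDerivAt (G N) (G' N r) r := by
  have h1r : (1:ℝ) - r ≠ 0 := by linarith
  have hA : HasDerivAt (fun r : ℝ => 2*r/(1-r)) ((2*(1-r) - 2*r*(-1))/(1-r)^2) r := by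
    have := ((hasDerivAt_id r).const_mul 2).fun_div
      ((hasDerivAt_id r).const_sub 1) h1r
    simpa using this
  have hB : HasDerivAt (fun r : ℝ => 2*Real.log (1-r)) (2*(-1/(1-r))) r := by
    have : HasDerivAt (fun r : ℝ => Real.log (1-r)) (-1/(1-r)) r := by
      have h := (((hasDerivAt_id r).const_sub 1).log h1r)
      simpa using h
    exact this.const_mul 2
  have hC : HasDerivAt (fun r : ℝ => 2*r^N/(1-r))
      (((2*(N:ℝ)*r^(N-1))*(1-r) - 2*r^N*(-1))/(1-r)^2) r := by
    have hnum : HasDerivAt (fun r : ℝ => 2*r^N) (2*(N:ℝ)*r^(N-1)) r := by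
      have := (hasDerivAt_pow N r).const_mul 2
      exact this.congr_deriv (by ring)
    exact hnum.div ((hasDerivAt_id r).const_sub 1) h1r
  have hD : HasDerivAt (fun r : ℝ => ∑ k ∈ Finset.range N, r^k/(k:ℝ))
      (∑ k ∈ Finset.range N, ((k:ℝ)*r^(k-1))/(k:ℝ)) r := by
    exact HasDerivAt.fun_sum fun k _ => (hasDerivAt_pow k r).div_const (k:ℝ)
  have := ((hA.add hB).add hC).add hD
  exact (this.sub_const (1 - Real.log 2))

lemma G'_pos (N : ℕ) {r : ℝ} (hr0 : 0 < r) (hr1 : r < 1) : 0 < G' N r := by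
  have h1r : (0:ℝ) < 1 - r := by linarith
  have h12 : (2*(1-r) - 2*r*(-1))/(1-r)^2 + 2*(-1/(1-r)) = 2*r/(1-r)^2 := by
    field_simp; ring
  have hsum : 0 ≤ ∑ k ∈ Finset.range N, ((k:ℝ)*r^(k-1))/(k:ℝ) :=
    Finset.sum_nonneg fun k _ => by
      rcases Nat.eq_zero_or_pos k with hk|hk
      · simp [hk]
      · have hk' : (0:ℝ) < k := by exact_mod_cast hk
        positivity
  have hC : 0 ≤ ((2*(N:ℝ)*r^(N-1))*(1-r) - 2*r^N*(-1))/(1-r)^2 := by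
    have he : ((2*(N:ℝ)*r^(N-1))*(1-r) - 2*r^N*(-1)) = 2*(N:ℝ)*r^(N-1)*(1-r) + 2*r^N := by ring
    rw [he]; positivity
  have hkey : 0 < 2*r/(1-r)^2 := by positivity
  unfold G'
  linarith [h12]

lemma G_strictMono (N : ℕ) : StrictMonoOn (G N) (Set.Ioo (0:ℝ) 1) := by
  refine strictMonoOn_of_hasDerivWithinAt_pos (f' := G' N) (convex_Ioo 0 1)
    (fun x hx => (hasDerivAt_G N hx.2).continuousAt.continuousWithinAt)
    (fun x hx => ?_) (fun x hx => ?_)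
  · rw [interior_Ioo] at hx
    exact (hasDerivAt_G N hx.2).hasDerivWithinAt
  · rw [interior_Ioo] at hx
    exact G'_pos N hx.1 hx.2

end BRaux

theorem R_strictMono_signs_unique_root (N : ℕ) (hN : 2 ≤ N) :
    StrictMonoOn
      (fun r : ℝ => 2*r/(1-r) + Real.log (1-r)
        + (∑' n : ℕ, (2 - 1/((n:ℝ)+N)) * r^(n+N)) - (1 - Real.log 2)) (Set.Ioo (0 : ℝ) 1) ∧
    (2*(0:ℝ)/(1-0) + Real.log (1-(0:ℝ))
        + (∑' n : ℕ, (2 - 1/((n:ℝ)+N)) * (0:ℝ)^(n+N)) - (1 - Real.log 2) = Real.log 2 - 1) ∧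
    Real.log 2 - 1 < 0 ∧
    0 < 2*((1:ℝ)/2)/(1-1/2) + Real.log (1-(1:ℝ)/2)
        + (∑' n : ℕ, (2 - 1/((n:ℝ)+N)) * ((1:ℝ)/2)^(n+N)) - (1 - Real.log 2) ∧
    (∃! r : ℝ, r ∈ Set.Ioo (0 : ℝ) (1/2) ∧
      2*r/(1-r) + Real.log (1-r)
        + (∑' n : ℕ, (2 - 1/((n:ℝ)+N)) * r^(n+N)) - (1 - Real.log 2) = 0) := by
  set F : ℝ → ℝ := fun r : ℝ => 2*r/(1-r) + Real.log (1-r)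
    + (∑' n : ℕ, (2 - 1/((n:ℝ)+N)) * r^(n+N)) - (1 - Real.log 2) with hF
  have hFG : ∀ {r : ℝ}, |r| < 1 → F r = BRaux.G N r := fun {r} hr =>
    BRaux.body_eq N hN hr
  have hmono : StrictMonoOn F (Set.Ioo (0:ℝ) 1) := by
    intro x hx y hy hxy
    rw [hFG (abs_lt.mpr ⟨by linarith [hx.1], hx.2⟩),
        hFG (abs_lt.mpr ⟨by linarith [hy.1], hy.2⟩)]
    exact BRaux.G_strictMono N hx hy hxy
  have hlog2 : Real.log 2 < 1 := by
    have := Real.log_two_lt_d9; linarith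
  have hF0 : F 0 = Real.log 2 - 1 := by
    have h0 : (∑' n : ℕ, (2 - 1/((n:ℝ)+N)) * (0:ℝ)^(n+N)) = 0 := by
      have heach : ∀ n : ℕ, (2 - 1/((n:ℝ)+N)) * (0:ℝ)^(n+N) = 0 := fun n => by
        rw [zero_pow (by omega : n + N ≠ 0), mul_zero]
      rw [tsum_congr heach, tsum_zero]
    rw [hF]
    simp only
    rw [h0]
    norm_num
  have hFhalf : 0 < F (1/2) := by
    rw [hFG (by rw [abs_of_nonneg (by norm_num : (0:ℝ) ≤ 1/2)]; norm_num)]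
    unfold BRaux.G
    have hs : 0 ≤ ∑ k ∈ Finset.range N, ((1:ℝ)/2)^k/(k:ℝ) :=
      Finset.sum_nonneg fun k _ => by positivity
    have hp : (0:ℝ) < ((1:ℝ)/2)^N := by positivity
    have hl : Real.log (1 - (1:ℝ)/2) = -Real.log 2 := by
      rw [show (1:ℝ) - 1/2 = 2⁻¹ by norm_num, Real.log_inv]
    rw [hl]
    have e1 : 2*((1:ℝ)/2)/(1-1/2) = 2 := by norm_num
    have e2 : 2*((1:ℝ)/2)^N/(1-1/2) = 4*((1:ℝ)/2)^N := by
      rw [show (1:ℝ) - 1/2 = 1/2 by norm_num]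
      field_simp
      ring
    rw [e1, e2]
    linarith
  refine ⟨hmono, hF0, by linarith, hFhalf, ?_⟩
  have hcont : ContinuousOn F (Set.Icc (0:ℝ) (1/2)) := by
    intro x hx
    have hx1 : x < 1 := lt_of_le_of_lt hx.2 (by norm_num)
    have hxm1 : -1 < x := by linarith [hx.1]
    have hnb : Set.Ioo (-1:ℝ) 1 ∈ nhds x := isOpen_Ioo.mem_nhds ⟨hxm1, hx1⟩
    have hev : F =ᶠ[nhds x] BRaux.G N := by
      filter_upwards [hnb] with y hy
      exact hFG (abs_lt.mpr ⟨hy.1, hy.2⟩)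
    exact ((BRaux.hasDerivAt_G N hx1).continuousAt.congr hev.symm).continuousWithinAt
  have hIVT := intermediate_value_Ioo (by norm_num : (0:ℝ) ≤ 1/2) hcont
  have h0mem : (0:ℝ) ∈ Set.Ioo (F 0) (F (1/2)) := ⟨by rw [hF0]; linarith, hFhalf⟩
  obtain ⟨r, hrmem, hr0⟩ := hIVT h0mem
  have hsub : Set.Ioo (0:ℝ) (1/2) ⊆ Set.Ioo (0:ℝ) 1 := fun z hz =>
    ⟨hz.1, lt_trans hz.2 (by norm_num)⟩
  refine ⟨r, ⟨hrmem, hr0⟩, ?_⟩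
  rintro y ⟨hymem, hy0⟩
  exact hmono.injOn (hsub hymem) (hsub hrmem) (hy0.trans hr0.symm)
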